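/- arXiv:2512.17458 — 2 statements merged into one kernel-verified Lean document; each statement's English description precedes it below -/
import Mathlib

section
/- Let n ≥ 1, let q be a nonzero complex number that is not a root of unity, let a be an integer with |a| ≥ n, and let t = q^{2a}, t = −q^{2a}, t = q^{2a−1}, or t = −q^{2a−1}. If λ and μ are Young diagrams each with at most n cells and W(λ,q,t) = W(μ,q,t), then λ = μ. -/
noncomputable section

/-- The content of a cell `(i, j)` of a Young diagram: `j - i`. -/
def cellContent (c : ℕ × ℕ) : ℤ := (c.2 : ℤ) - (c.1 : ℤ)

/-- `diagCount lam d` is `m_λ(d)`, the number of cells of `lam` of content `d`. -/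
def diagCount (lam : YoungDiagram) (d : ℤ) : ℕ :=
  (lam.cells.filter (fun c => cellContent c = d)).card

/-- The rational function
`W(λ,q,t) = ∏_{c∈λ}(1 − t⁻¹q^{−2·ct(c)}T) / ∏_{c∈λ}(1 − t·q^{2·ct(c)}T) ∈ RatFunc ℂ`. -/
def WFun (q t : ℂˣ) (lam : YoungDiagram) : RatFunc ℂ :=
  (∏ c ∈ lam.cells,
      (1 - RatFunc.C ((t : ℂ)⁻¹ * (q : ℂ) ^ (-2 * cellContent c)) * RatFunc.X)) /
  (∏ c ∈ lam.cells,
      (1 - RatFunc.C ((t : ℂ) * (q : ℂ) ^ (2 * cellContent c)) * RatFunc.X))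

section Aux
open Polynomial

private lemma descend {P : ℕ → Prop} (hmono : ∀ k, P (k + 1) → P k) :
    ∀ j i, i ≤ j → P j → P i := by
  intro j
  induction j with
  | zero => intro i hi hp; obtain rfl := Nat.le_zero.mp hi; exact hp
  | succ j ih =>
    intro i hi hp
    rcases Nat.eq_or_lt_of_le hi with h | h
    · rwa [h]
    · exact ih i (Nat.lt_succ_iff.mp h) (hmono j hp)

private lemma antitone_filter (P : ℕ → Prop) [DecidablePred P] {N : ℕ}
    (hmono : ∀ k, P (k + 1) → P k) (hN : ∀ k, N ≤ k → ¬P k) (k : ℕ) :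
    P k ↔ k < ((Finset.range N).filter P).card := by
  have hex : ∃ m, ¬P m := ⟨N, hN N le_rfl⟩
  have hiff : ∀ m, P m ↔ m < Nat.find hex := by
    intro m
    constructor
    · intro hp
      by_contra h
      exact Nat.find_spec hex (descend hmono m _ (le_of_not_gt h) hp)
    · intro h
      exact not_not.mp (Nat.find_min hex h)
  have hMN : Nat.find hex ≤ N := Nat.find_le (hN N le_rfl)
  have hfe : (Finset.range N).filter P = Finset.range (Nat.find hex) := by
    ext x
    rw [Finset.mem_filter, Finset.mem_range, Finset.mem_range]
    constructor
    · intro hx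
      exact (hiff x).mp hx.2
    · intro hx
      have hx' := (hiff x).mpr hx
      exact ⟨by omega, hx'⟩
  rw [hfe, Finset.card_range]
  exact hiff k

private lemma lt_card_of_mem {lam : YoungDiagram} {i j : ℕ} (h : (i, j) ∈ lam) :
    i < lam.card ∧ j < lam.card := by
  constructor
  · have hsub : (Finset.range (i + 1)).image (fun i' => (i', j)) ⊆ lam.cells := by
      intro c hc
      simp only [Finset.mem_image, Finset.mem_range] at hc
      obtain ⟨i', hi', rfl⟩ := hc
      exact (YoungDiagram.mem_cells _).mpr (lam.up_left_mem (Nat.lt_succ_iff.mp hi') le_rfl h)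
    have hle := Finset.card_le_card hsub
    rwa [Finset.card_image_of_injective _ (fun a b hab => by simpa using hab),
      Finset.card_range] at hle
  · have hsub : (Finset.range (j + 1)).image (fun j' => (i, j')) ⊆ lam.cells := by
      intro c hc
      simp only [Finset.mem_image, Finset.mem_range] at hc
      obtain ⟨j', hj', rfl⟩ := hc
      exact (YoungDiagram.mem_cells _).mpr (lam.up_left_mem le_rfl (Nat.lt_succ_iff.mp hj') h)
    have hle := Finset.card_le_card hsub
    rwa [Finset.card_image_of_injective _ (fun a b hab => by simpa using hab),
      Finset.card_range] at hle

private lemma abs_content_lt {lam : YoungDiagram} {c : ℕ × ℕ} (h : c ∈ lam.cells) :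
    -(lam.card : ℤ) < cellContent c ∧ cellContent c < (lam.card : ℤ) := by
  obtain ⟨i, j⟩ := c
  have h' := (YoungDiagram.mem_cells _).mp h
  obtain ⟨h1, h2⟩ := lt_card_of_mem h'
  simp only [cellContent]
  omega

private lemma cell_eq {i j i₀ j₀ : ℕ} (hmin : i₀ = 0 ∨ j₀ = 0)
    (hc : (j : ℤ) - (i : ℤ) = (j₀ : ℤ) - (i₀ : ℤ)) :
    i = min i j + i₀ ∧ j = min i j + j₀ := by
  rcases hmin with rfl | rfl <;> constructor <;> omega

private lemma diagCount_eq (lam : YoungDiagram) (i₀ j₀ : ℕ) (hmin : i₀ = 0 ∨ j₀ = 0) :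
    diagCount lam ((j₀ : ℤ) - (i₀ : ℤ)) =
      ((Finset.range lam.card).filter (fun k => (k + i₀, k + j₀) ∈ lam)).card := by
  classical
  unfold diagCount
  apply Finset.card_bij' (fun c _ => min c.1 c.2) (fun k _ => (k + i₀, k + j₀))
  · rintro ⟨i, j⟩ hc
    rw [Finset.mem_filter] at hc
    simp only [cellContent] at hc
    obtain ⟨hmem, hcc⟩ := hc
    obtain ⟨h1, h2⟩ := cell_eq hmin hcc
    simp only [Finset.mem_filter, Finset.mem_range]
    constructor
    · have := (lt_card_of_mem ((YoungDiagram.mem_cells _).mp hmem)).1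
      omega
    · have : ((min i j + i₀ : ℕ), (min i j + j₀ : ℕ)) = (i, j) := by
        rw [← h1, ← h2]
      rw [this]
      exact (YoungDiagram.mem_cells _).mp hmem
  · intro k hk
    simp only [Finset.mem_filter, Finset.mem_range] at hk
    rw [Finset.mem_filter]
    simp only [cellContent]
    exact ⟨(YoungDiagram.mem_cells _).mpr hk.2, by rcases hmin with rfl | rfl <;> push_cast <;> ring⟩
  · rintro ⟨i, j⟩ hc
    rw [Finset.mem_filter] at hc
    simp only [cellContent] at hc
    obtain ⟨h1, h2⟩ := cell_eq hmin hc.2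
    simp only [← h1, ← h2]
  · intro k hk
    simp only
    omega

private lemma mem_iff_min_lt (lam : YoungDiagram) (i j : ℕ) :
    (i, j) ∈ lam ↔ min i j < diagCount lam ((j : ℤ) - (i : ℤ)) := by
  classical
  obtain ⟨i₀, j₀, hmin, hd⟩ : ∃ i₀ j₀ : ℕ, (i₀ = 0 ∨ j₀ = 0) ∧
      (j₀ : ℤ) - (i₀ : ℤ) = (j : ℤ) - (i : ℤ) := by
    rcases le_total i j with h | h
    · exact ⟨0, j - i, Or.inl rfl, by omega⟩
    · exact ⟨i - j, 0, Or.inr rfl, by omega⟩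
  rw [← hd, diagCount_eq lam i₀ j₀ hmin]
  have hmono : ∀ k, ((k + 1) + i₀, (k + 1) + j₀) ∈ lam → (k + i₀, k + j₀) ∈ lam :=
    fun k h => lam.up_left_mem (by omega) (by omega) h
  have hN : ∀ k, lam.card ≤ k → ¬((k + i₀, k + j₀) ∈ lam) := by
    intro k hk h
    have := (lt_card_of_mem h).1
    omega
  have hiff := antitone_filter (fun k => (k + i₀, k + j₀) ∈ lam) hmono hN (min i j)
  obtain ⟨h1, h2⟩ := cell_eq hmin hd.symm
  have heq : ((min i j + i₀ : ℕ), (min i j + j₀ : ℕ)) = (i, j) := by rw [← h1, ← h2]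
  rw [← heq]
  exact hiff

private lemma eq_of_diagCount {lam mu : YoungDiagram}
    (h : ∀ d, diagCount lam d = diagCount mu d) : lam = mu := by
  ext ⟨i, j⟩
  rw [YoungDiagram.mem_cells, YoungDiagram.mem_cells, mem_iff_min_lt, mem_iff_min_lt, h]

private def Qpoly (u : ℤ → ℂ) (ν : YoungDiagram) : Polynomial ℂ :=
  ∏ c ∈ ν.cells, (1 - C (u (cellContent c)) * X)

private lemma one_sub_C_mul_X_ne_zero (b : ℂ) : (1 - C b * X : Polynomial ℂ) ≠ 0 := by
  intro hb
  have := congrArg (fun p => Polynomial.coeff p 0) hb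
  simp at this

private lemma Qpoly_ne_zero (u : ℤ → ℂ) (ν : YoungDiagram) : Qpoly u ν ≠ 0 :=
  Finset.prod_ne_zero_iff.mpr fun _ _ => one_sub_C_mul_X_ne_zero _

private lemma roots_one_sub_C_mul_X {b : ℂ} (hb : b ≠ 0) :
    (1 - C b * X : Polynomial ℂ).roots = {b⁻¹} := by
  have h : (1 - C b * X : Polynomial ℂ) = C (-b) * (X - C b⁻¹) := by
    rw [mul_sub, ← C_mul, neg_mul, mul_inv_cancel₀ hb, map_neg, map_neg, C_1]
    ring
  rw [h, roots_C_mul _ (neg_ne_zero.mpr hb), roots_X_sub_C]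

private lemma count_roots_Qpoly (u : ℤ → ℂ) (hu0 : ∀ d, u d ≠ 0) (ν : YoungDiagram) (z : ℂ) :
    (Qpoly u ν).roots.count z =
      (ν.cells.filter (fun c => z = (u (cellContent c))⁻¹)).card := by
  classical
  rw [Qpoly, Polynomial.roots_prod _ _ (Qpoly_ne_zero u ν), Multiset.count_bind]
  have h1 : ∀ c : ℕ × ℕ,
      Multiset.count z (1 - C (u (cellContent c)) * X : Polynomial ℂ).roots =
        if z = (u (cellContent c))⁻¹ then 1 else 0 := by
    intro c
    rw [roots_one_sub_C_mul_X (hu0 _), Multiset.count_singleton]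
  calc (Multiset.map
        (fun c => Multiset.count z (1 - C (u (cellContent c)) * X : Polynomial ℂ).roots)
        ν.cells.val).sum
      = ∑ c ∈ ν.cells, if z = (u (cellContent c))⁻¹ then 1 else 0 := by
        rw [Finset.sum]
        congr 1
        exact Multiset.map_congr rfl fun c _ => h1 c
    _ = _ := by rw [Finset.sum_boole]; norm_num

end Aux

/-- If `q` is not a root of unity, `|a| ≥ n`, and `t` is one of
`±q^(2a), ±q^(2a−1)`, then `λ ↦ W(λ,q,t)` is injective on Young diagrams with at most
`n` cells. -/
theorem WFun_injective_high_powers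
    (n : ℕ) (hn : 1 ≤ n)
    (q t : ℂˣ)
    (hq : ∀ k : ℕ, 0 < k → q ^ k ≠ 1)
    (a : ℤ) (ha : (n : ℤ) ≤ |a|)
    (ht : t = q ^ (2 * a) ∨ t = -(q ^ (2 * a)) ∨
          t = q ^ (2 * a - 1) ∨ t = -(q ^ (2 * a - 1))) :
    ∀ lam mu : YoungDiagram, lam.card ≤ n → mu.card ≤ n →
      WFun q t lam = WFun q t mu → lam = mu := by
  classical
  intro lam mu hlam hmu hW
  have hq0 : (q : ℂ) ≠ 0 := q.ne_zero
  have ht0 : (t : ℂ) ≠ 0 := t.ne_zero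
  -- q is not a root of unity, as an integer-power statement in ℂ
  have hz : ∀ m : ℤ, (q : ℂ) ^ m = 1 → m = 0 := by
    have hnat : ∀ k : ℕ, (q : ℂ) ^ k = 1 → k = 0 := by
      intro k hk
      by_contra h
      apply hq k (Nat.pos_of_ne_zero h)
      ext
      simpa [Units.val_pow_eq_pow_val] using hk
    intro m hm
    rcases m with k | k
    · simpa using hnat k (by simpa [zpow_natCast] using hm)
    · exfalso
      rw [zpow_negSucc, inv_eq_one] at hm
      exact (Nat.succ_ne_zero k) (hnat _ hm)
  set u : ℤ → ℂ := fun d => (t : ℂ) * (q : ℂ) ^ (2 * d) with hu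
  have hu0 : ∀ d, u d ≠ 0 := fun d => mul_ne_zero ht0 (zpow_ne_zero _ hq0)
  have huinv : ∀ d : ℤ, (t : ℂ)⁻¹ * (q : ℂ) ^ (-2 * d) = (u d)⁻¹ := by
    intro d
    rw [hu]
    simp only
    rw [mul_inv, ← zpow_neg, neg_mul]
  have huinj : ∀ d e : ℤ, u d = u e → d = e := by
    intro d e h
    have h2 : (q : ℂ) ^ (2 * d) = (q : ℂ) ^ (2 * e) := mul_left_cancel₀ ht0 h
    have h3 : (q : ℂ) ^ (2 * d - 2 * e) = 1 := by
      rw [zpow_sub₀ hq0, h2, div_self (zpow_ne_zero _ hq0)]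
    have := hz _ h3
    omega
  -- t² is a high power of q
  have ht2 : ∃ s : ℤ, (t : ℂ) ^ 2 = (q : ℂ) ^ s ∧ (s = 4 * a ∨ s = 4 * a - 2) := by
    have hpow : ∀ b : ℤ, (((q ^ b : ℂˣ) : ℂ)) ^ 2 = (q : ℂ) ^ (2 * b) := by
      intro b
      rw [Units.val_zpow_eq_zpow_val, ← zpow_natCast ((q : ℂ) ^ b) 2, ← zpow_mul]
      congr 1
      push_cast
      ring
    rcases ht with h | h | h | h
    · exact ⟨4 * a, by rw [h, hpow]; congr 1; ring, Or.inl rfl⟩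
    · exact ⟨4 * a, by rw [h, Units.val_neg, neg_sq, hpow]; congr 1; ring, Or.inl rfl⟩
    · exact ⟨4 * a - 2, by rw [h, hpow]; congr 1; ring, Or.inr rfl⟩
    · exact ⟨4 * a - 2, by rw [h, Units.val_neg, neg_sq, hpow]; congr 1; ring, Or.inr rfl⟩
  obtain ⟨s, hts, hs⟩ := ht2
  -- the key non-cancellation inequality
  have hkey : ∀ d e : ℤ, -(n : ℤ) < d → d < n → -(n : ℤ) < e → e < n →
      u e ≠ (u d)⁻¹ := by
    intro d e hd1 hd2 he1 he2 heq
    have h1 : u e * u d = 1 := by rw [heq, inv_mul_cancel₀ (hu0 d)]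
    have h2 : (q : ℂ) ^ (s + (2 * e + 2 * d)) = 1 := by
      rw [zpow_add₀ hq0, ← hts, zpow_add₀ hq0, ← h1, hu]
      simp only
      ring
    have h3 := hz _ h2
    have ha' := le_abs.mp ha
    omega
  -- rewrite WFun via polynomials
  have hfacne := one_sub_C_mul_X_ne_zero
  have hP0 : ∀ ν, Qpoly (fun d => (u d)⁻¹) ν ≠ 0 := Qpoly_ne_zero _
  have hQ0 : ∀ ν, Qpoly u ν ≠ 0 := Qpoly_ne_zero _
  have hWrep : ∀ ν : YoungDiagram, WFun q t ν =
      algebraMap (Polynomial ℂ) (RatFunc ℂ) (Qpoly (fun d => (u d)⁻¹) ν) /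
        algebraMap (Polynomial ℂ) (RatFunc ℂ) (Qpoly u ν) := by
    intro ν
    rw [WFun, Qpoly, Qpoly, map_prod, map_prod]
    have halg : ∀ b : ℂ, algebraMap (Polynomial ℂ) (RatFunc ℂ) (1 - Polynomial.C b * Polynomial.X)
        = 1 - RatFunc.C b * RatFunc.X := by
      intro b
      rw [map_sub, map_one, map_mul, RatFunc.algebraMap_C, RatFunc.algebraMap_X]
    congr 1
    · refine Finset.prod_congr rfl fun c _ => ?_
      rw [halg, huinv]
    · refine Finset.prod_congr rfl fun c _ => ?_
      rw [halg]
  rw [hWrep lam, hWrep mu,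
    div_eq_div_iff (RatFunc.algebraMap_ne_zero (hQ0 lam))
      (RatFunc.algebraMap_ne_zero (hQ0 mu)), ← map_mul, ← map_mul] at hW
  have hpoly := RatFunc.algebraMap_injective ℂ hW
  -- compare root multiplicities
  have hcount : ∀ d : ℤ, diagCount lam d = diagCount mu d := by
    intro d
    by_cases hd : -(n : ℤ) < d ∧ d < n
    · have h1 := congrArg (fun p : Polynomial ℂ => p.roots.count ((u d)⁻¹)) hpoly
      rw [Polynomial.roots_mul (mul_ne_zero (hP0 lam) (hQ0 mu)),
        Polynomial.roots_mul (mul_ne_zero (hP0 mu) (hQ0 lam)),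
        Multiset.count_add, Multiset.count_add,
        count_roots_Qpoly _ (fun e => inv_ne_zero (hu0 e)) lam,
        count_roots_Qpoly _ (fun e => inv_ne_zero (hu0 e)) mu,
        count_roots_Qpoly u hu0 lam, count_roots_Qpoly u hu0 mu] at h1
      have hPzero : ∀ (ν : YoungDiagram), ν.card ≤ n →
          (ν.cells.filter (fun c => (u d)⁻¹ = ((fun e => (u e)⁻¹) (cellContent c))⁻¹)).card = 0 := by
        intro ν hν
        rw [Finset.card_eq_zero, Finset.filter_eq_empty_iff]
        intro c hc
        simp only [inv_inv]
        obtain ⟨hc1, hc2⟩ := abs_content_lt hc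
        have hcard : (ν.card : ℤ) ≤ n := by exact_mod_cast hν
        intro hzz
        exact hkey d (cellContent c) hd.1 hd.2 (by omega) (by omega) hzz.symm
      have hQcount : ∀ ν : YoungDiagram,
          (ν.cells.filter (fun c => (u d)⁻¹ = (u (cellContent c))⁻¹)).card = diagCount ν d := by
        intro ν
        unfold diagCount
        congr 1
        apply Finset.filter_congr
        intro c _
        rw [inv_inj]
        constructor
        · intro h; exact (huinj _ _ h).symm
        · rintro rfl; rfl
      rw [hPzero lam hlam, hPzero mu hmu, hQcount lam, hQcount mu] at h1
      omega
    · have hzero : ∀ (ν : YoungDiagram), ν.card ≤ n → diagCount ν d = 0 := by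
        intro ν hν
        rw [diagCount, Finset.card_eq_zero, Finset.filter_eq_empty_iff]
        intro c hc hceq
        obtain ⟨hc1, hc2⟩ := abs_content_lt hc
        have hcard : (ν.card : ℤ) ≤ n := by exact_mod_cast hν
        omega
      rw [hzero lam hlam, hzero mu hmu]
  exact eq_of_diagCount hcount
end
end

section
/- Let n ≥ 3, let a be an integer with 2 ≤ a ≤ n − 1, let q be a nonzero complex number, and set t = q^{2a−1}. Then the Young diagrams of the hook partitions (n−a, 1^a) (of n) and (n−a, 1^{a−2}) (of n−2) satisfy W((n−a,1^a), q, t) = W((n−a,1^{a−2}), q, t). In particular, for small odd powers t = q^{2a−1} the function λ ↦ W(λ,q,t) does not separate these two distinct partitions. -/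
noncomputable section

/-- A hook row-length list `m :: (1, …, 1)` with `m ≥ 1` is sorted decreasingly. -/
lemma sorted_hook (m k : ℕ) (hm : 1 ≤ m) :
    List.SortedGE (m :: List.replicate k 1) := by
  rw [List.sortedGE_iff_pairwise]
  have hrep : List.Pairwise (· ≥ ·) (List.replicate k 1) := by
    induction k with
    | zero => simp
    | succ k ih =>
      rw [List.replicate_succ]
      refine List.pairwise_cons.mpr ⟨?_, ih⟩
      intro b hb
      rw [List.eq_of_mem_replicate hb]
  refine List.pairwise_cons.mpr ⟨?_, hrep⟩
  intro b hb
  rw [List.eq_of_mem_replicate hb]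
  exact hm

/-- Membership in a hook diagram. -/
lemma mem_hook_iff (m k : ℕ) (hm : 1 ≤ m) (c : ℕ × ℕ) :
    c ∈ YoungDiagram.ofRowLens (m :: List.replicate k 1) (sorted_hook m k hm) ↔
      (c.1 = 0 ∧ c.2 < m) ∨ (0 < c.1 ∧ c.1 ≤ k ∧ c.2 = 0) := by
  rw [YoungDiagram.mem_ofRowLens]
  rcases c with ⟨i, j⟩
  cases i with
  | zero => simp
  | succ i =>
    simp only [List.length_cons, List.length_replicate, List.getElem_cons_succ,
      List.getElem_replicate]
    constructor
    · rintro ⟨h1, h2⟩; omega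
    · rintro h; exact ⟨by omega, by omega⟩

/-- `1 - c·X ≠ 0` in `RatFunc ℂ`. -/
lemma one_sub_CX_ne_zero (c : ℂ) : (1 : RatFunc ℂ) - RatFunc.C c * RatFunc.X ≠ 0 := by
  have h : (1 : RatFunc ℂ) - RatFunc.C c * RatFunc.X
      = algebraMap (Polynomial ℂ) (RatFunc ℂ) (1 - Polynomial.C c * Polynomial.X) := by
    push_cast [RatFunc.algebraMap_C, RatFunc.algebraMap_X, map_sub, map_mul, map_one]
    ring
  rw [h]
  refine RatFunc.algebraMap_ne_zero ?_
  intro hz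
  have := congrArg (Polynomial.coeff · 0) hz
  simp at this

/-- For `n ≥ 3`, `2 ≤ a ≤ n − 1` and `t = q^(2a−1)`, the hook
partitions `(n−a, 1^a)` and `(n−a, 1^(a−2))` have the same `W`-function, although they
are distinct. -/
theorem WFun_not_injective_small_odd_powers
    (n a : ℕ) (hn : 3 ≤ n) (ha1 : 2 ≤ a) (ha2 : a ≤ n - 1)
    (q t : ℂˣ) (ht : t = q ^ (2 * a - 1)) :
    let lam := YoungDiagram.ofRowLens ((n - a) :: List.replicate a 1)
      (sorted_hook (n - a) a (by omega))
    let mu := YoungDiagram.ofRowLens ((n - a) :: List.replicate (a - 2) 1)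
      (sorted_hook (n - a) (a - 2) (by omega))
    WFun q t lam = WFun q t mu ∧ lam ≠ mu := by
  intro lam mu
  have hm : 1 ≤ n - a := by omega
  have hq : (q : ℂ) ≠ 0 := q.ne_zero
  have htc : (t : ℂ) = (q : ℂ) ^ (2 * a - 1) := by rw [ht]; push_cast; ring
  -- the cells of lam are those of mu plus (a-1,0) and (a,0)
  have hcells : lam.cells = insert (a, 0) (insert (a - 1, 0) mu.cells) := by
    ext c
    rcases c with ⟨i, j⟩
    rw [Finset.mem_insert, Finset.mem_insert, YoungDiagram.mem_cells, YoungDiagram.mem_cells,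
      mem_hook_iff (n - a) a (by omega), mem_hook_iff (n - a) (a - 2) (by omega)]
    simp only [Prod.mk.injEq]
    omega
  have hni : ((a : ℕ), (0 : ℕ)) ∉ insert ((a - 1 : ℕ), (0 : ℕ)) mu.cells := by
    rw [Finset.mem_insert, YoungDiagram.mem_cells, mem_hook_iff (n - a) (a - 2) (by omega)]
    simp only [Prod.mk.injEq]
    omega
  have hni' : ((a - 1 : ℕ), (0 : ℕ)) ∉ mu.cells := by
    rw [YoungDiagram.mem_cells, mem_hook_iff (n - a) (a - 2) (by omega)]
    omega
  constructor
  · -- key coefficient identities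
    have key1 : (t : ℂ)⁻¹ * (q : ℂ) ^ (-2 * cellContent (a, 0))
        = (t : ℂ) * (q : ℂ) ^ (2 * cellContent (a - 1, 0)) := by
      simp only [cellContent, htc]
      rw [← zpow_natCast (q : ℂ) (2 * a - 1), ← zpow_neg, ← zpow_add₀ hq, ← zpow_add₀ hq]
      congr 1
      push_cast [Nat.cast_sub (by omega : 1 ≤ 2 * a), Nat.cast_sub (by omega : 1 ≤ a)]
      ring
    have key2 : (t : ℂ)⁻¹ * (q : ℂ) ^ (-2 * cellContent (a - 1, 0))
        = (t : ℂ) * (q : ℂ) ^ (2 * cellContent (a, 0)) := by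
      simp only [cellContent, htc]
      rw [← zpow_natCast (q : ℂ) (2 * a - 1), ← zpow_neg, ← zpow_add₀ hq, ← zpow_add₀ hq]
      congr 1
      push_cast [Nat.cast_sub (by omega : 1 ≤ 2 * a), Nat.cast_sub (by omega : 1 ≤ a)]
      ring
    rw [WFun, WFun, hcells, Finset.prod_insert hni, Finset.prod_insert hni',
      Finset.prod_insert hni, Finset.prod_insert hni', key1, key2, mul_left_comm,
      mul_div_mul_left _ _ (one_sub_CX_ne_zero _),
      mul_div_mul_left _ _ (one_sub_CX_ne_zero _)]
  · intro h
    have : ((a : ℕ), (0 : ℕ)) ∈ mu := by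
      rw [← h, mem_hook_iff (n - a) a (by omega)]
      omega
    rw [mem_hook_iff (n - a) (a - 2) (by omega)] at this
    omega
end
end
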